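/- Let k ≥ 1, let π be a strictly positive probability vector on Fin k, and let r : Fin k → ℝ. Then inf over r' ∈ ℝ^k of (Σ_i π_i·r'_i + log Σ_i exp(r_i − r'_i)) equals Σ_i π_i·r_i + Σ_i π_i·log π_i, and the infimum is attained at r'_i = r_i − log π_i. That is, the entropy-regularized PM RLHF objective Σ_i π_i·(r_i − log π_i) equals the negative of the robust adversarially-perturbed reward value, establishing the dual (robust-optimization) formulation of PM RLHF. -/

import Mathlib

/-- Dual (robust-optimization) formulation of PM RLHF: the adversarially perturbed
objective is minimized over `r'` at `r' i = r i - log (π i)`, with minimum value equal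
to the entropy-regularized PM RLHF objective `∑ i, π i * (r i - log (π i))`. -/
theorem pm_rlhf_dual_robust_formulation
    (k : ℕ) (hk : 1 ≤ k) (π : Fin k → ℝ)
    (hpos : ∀ i, 0 < π i) (hsum : ∑ i, π i = 1)
    (r : Fin k → ℝ) :
    (∀ r' : Fin k → ℝ,
      ∑ i, π i * r i - ∑ i, π i * Real.log (π i)
        ≤ ∑ i, π i * r' i + Real.log (∑ i, Real.exp (r i - r' i))) ∧
    (∑ i, π i * (r i - Real.log (π i))
        + Real.log (∑ i, Real.exp (r i - (r i - Real.log (π i))))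
      = ∑ i, π i * r i - ∑ i, π i * Real.log (π i)) := by
  constructor
  · intro r'
    set x : Fin k → ℝ := fun i => r i - r' i with hx
    have key : ∑ i, π i * x i - ∑ i, π i * Real.log (π i)
        ≤ Real.log (∑ i, Real.exp (x i)) := by
      have hz : ∀ i ∈ Finset.univ, (0:ℝ) ≤ Real.exp (x i) / π i :=
        fun i _ => div_nonneg (Real.exp_pos _).le (hpos i).le
      have hgm := Real.geom_mean_le_arith_mean_weighted Finset.univ π
        (fun i => Real.exp (x i) / π i) (fun i _ => (hpos i).le) hsum hz
      have hsimp : ∀ i, π i * (Real.exp (x i) / π i) = Real.exp (x i) := fun i =>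
        mul_div_cancel₀ _ (hpos i).ne'
      rw [Finset.sum_congr rfl (fun i _ => hsimp i)] at hgm
      have hprodpos : (0:ℝ) < ∏ i, (Real.exp (x i) / π i) ^ π i := by
        apply Finset.prod_pos
        intro i _
        exact Real.rpow_pos_of_pos (div_pos (Real.exp_pos _) (hpos i)) _
      have hlog := Real.log_le_log hprodpos hgm
      rw [Real.log_prod (fun i _ => (Real.rpow_pos_of_pos
        (div_pos (Real.exp_pos _) (hpos i)) _).ne')] at hlog
      calc ∑ i, π i * x i - ∑ i, π i * Real.log (π i)
          = ∑ i, Real.log ((Real.exp (x i) / π i) ^ π i) := by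
            rw [← Finset.sum_sub_distrib]
            refine Finset.sum_congr rfl fun i _ => ?_
            rw [Real.log_rpow (div_pos (Real.exp_pos _) (hpos i)),
              Real.log_div (Real.exp_pos _).ne' (hpos i).ne', Real.log_exp, hx]
            ring
        _ ≤ Real.log (∑ i, Real.exp (x i)) := hlog
    have hlin : ∑ i, π i * x i = ∑ i, π i * r i - ∑ i, π i * r' i := by
      rw [← Finset.sum_sub_distrib]
      exact Finset.sum_congr rfl fun i _ => by rw [hx]; ring
    linarith [key, hlin.le, hlin.ge]
  · have h1 : ∀ i, r i - (r i - Real.log (π i)) = Real.log (π i) := fun i => by ring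
    simp only [h1]
    have h2 : ∀ i ∈ Finset.univ, Real.exp (Real.log (π i)) = π i := fun i _ =>
      Real.exp_log (hpos i)
    rw [Finset.sum_congr rfl h2, hsum, Real.log_one, add_zero,
      ← Finset.sum_sub_distrib]
    exact Finset.sum_congr rfl fun i _ => by ring
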